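/- For all a, b, c, d ∈ F(A), the pairs (a, b) and (c, d) are related by the equivalence relation generated by R (its reflexive-symmetric-transitive closure) if and only if a·b = c·d in F(A). -/

import Mathlib

namespace SplitMachine

variable {A : Type*}

/-- `R (a, b) (c, d)` iff `c = a · (of x)⁻¹` and `d = (of x) · b` for some `x ∈ A`. -/
def R (P Q : FreeGroup A × FreeGroup A) : Prop :=
  ∃ x : A, Q.1 = P.1 * (FreeGroup.of x)⁻¹ ∧ Q.2 = FreeGroup.of x * P.2

lemma move (g a b : FreeGroup A) :
    Relation.EqvGen (R (A := A)) (a * g, b) (a, g * b) := by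
  induction g using FreeGroup.induction_on generalizing a b with
  | C1 => simpa using Relation.EqvGen.refl _
  | of x =>
      have hpx : (pure x : FreeGroup A) = FreeGroup.of x := rfl
      exact Relation.EqvGen.rel _ _ ⟨x, by simp [hpx], by simp [hpx]⟩
  | inv_of x _ =>
      have hpx : (pure x : FreeGroup A) = FreeGroup.of x := rfl
      refine Relation.EqvGen.symm _ _ (Relation.EqvGen.rel _ _ ⟨x, by simp [hpx], by simp [hpx]⟩)
  | mul u v hu hv =>
      have h1 : Relation.EqvGen (R (A := A)) (a * (u * v), b) (a * u, v * b) := by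
        simpa [mul_assoc] using hv (a * u) b
      exact Relation.EqvGen.trans _ _ _ h1 (by simpa [mul_assoc] using hu a (v * b))

/-- `(a, b)` and `(c, d)` are related by the equivalence relation generated by `R`
iff `a·b = c·d`. -/
theorem eqvGen_iff_mul_eq (a b c d : FreeGroup A) :
    Relation.EqvGen (R (A := A)) (a, b) (c, d) ↔ a * b = c * d := by
  constructor
  · intro h
    have key : ∀ P Q : FreeGroup A × FreeGroup A, Relation.EqvGen (R (A := A)) P Q →
        P.1 * P.2 = Q.1 * Q.2 := by
      intro P Q h
      induction h with
      | rel P Q h => obtain ⟨x, h1, h2⟩ := h; simp [h1, h2, mul_assoc]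
      | refl => rfl
      | symm _ _ _ ih => exact ih.symm
      | trans _ _ _ _ _ ih1 ih2 => exact ih1.trans ih2
    exact key _ _ h
  · intro h
    have h1 : Relation.EqvGen (R (A := A)) (a, b) (1, a * b) := by
      simpa using move a 1 b
    have h2 : Relation.EqvGen (R (A := A)) (c, d) (1, c * d) := by
      simpa using move c 1 d
    rw [h] at h1
    exact Relation.EqvGen.trans _ _ _ h1 (Relation.EqvGen.symm _ _ h2)

end SplitMachine
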